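/- For f(x,u,p,q) = −x·p⁴q³ + u·p³q³ on the open set {p ≠ 0, q ≠ 0}: (i) H(x,u,p) = 1/p² satisfies the Riccati equation −(2/J₃)D̂ₓH + H² = K; (ii) b(x,u,p) = p satisfies D̂ₓb = −(J₃H)b; (iii) a₁ ≡ 1 satisfies D̂ₓa₁ = J₃(H+I₅)a₁, (a₁)_u = (HI₇ − Q)a₁, (a₁)_p = (I₄(H+I₅) − I₇/J₃)a₁, (a₁)_q = 0; (iv) φ(x,u,p) = p satisfies D̂ₓφ = −J₃/b, φ_u = −I₇/b, φ_p = −I₄/b; (v) with χ(x,u,p) = −x, ψ(x,u,p) = u − xp, η := D̂ₓχ/D̂ₓφ and f̄ := φ³·ψ, one has D̂ₓη = −(J₃/b)f̄, η_u = ((H+I₅)²/2 + I₂/(2J₃²))b²a₁ − (I₇/b)f̄, η_p = ((H+I₅)/J₃ + I₁/(3J₃²))b²a₁ − (I₄/b)f̄, η_q = b²a₁/J₃², D̂ₓχ = −(J₃/b)η, χ_u = −(H+I₅)b·a₁ − (I₇/b)η, χ_p = −b·a₁/J₃ − (I₄/b)η, I₇D̂ₓψ = J₃(ψ_u − a₁),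 ψ_x = χφ_x − p·a₁, and ψ_p = −(I₄/b)χ. -/

import Mathlib

/-!
Invariants of the third-order ODE `u''' = f(x, u, u', u'')` under contact
transformations, following Cartan's equivalence method.
We write `p = u'`, `q = u''`.
-/

noncomputable section

/-- The real cube root of a real number. -/
def cbrt (y : ℝ) : ℝ := if 0 ≤ y then y ^ ((1 : ℝ)/3) else -((-y) ^ ((1 : ℝ)/3))

/-- Functions of `(x, u, p, q)`. -/
abbrev Fn : Type := ℝ → ℝ → ℝ → ℝ → ℝ

/-- Functions of `(x, u, p)`. -/
abbrev Fn3 : Type := ℝ → ℝ → ℝ → ℝ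

/-- Partial derivative in `x` of a function of `(x,u,p,q)`. -/
def pdx (g : Fn) : Fn := fun x u p q => deriv (fun t => g t u p q) x
/-- Partial derivative in `u` of a function of `(x,u,p,q)`. -/
def pdu (g : Fn) : Fn := fun x u p q => deriv (fun t => g x t p q) u
/-- Partial derivative in `p` of a function of `(x,u,p,q)`. -/
def pdp (g : Fn) : Fn := fun x u p q => deriv (fun t => g x u t q) p
/-- Partial derivative in `q` of a function of `(x,u,p,q)`. -/
def pdq (g : Fn) : Fn := fun x u p q => deriv (fun t => g x u p t) q

/-- Partial derivative in `x` of a function of `(x,u,p)`. -/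
def pdx3 (g : Fn3) : Fn3 := fun x u p => deriv (fun t => g t u p) x
/-- Partial derivative in `u` of a function of `(x,u,p)`. -/
def pdu3 (g : Fn3) : Fn3 := fun x u p => deriv (fun t => g x t p) u
/-- Partial derivative in `p` of a function of `(x,u,p)`. -/
def pdp3 (g : Fn3) : Fn3 := fun x u p => deriv (fun t => g x u t) p

/-- Lift of a function of `(x,u,p)` to a function of `(x,u,p,q)`, constant in `q`. -/
def lift (g : Fn3) : Fn := fun x u p _ => g x u p

/-- The total derivative operator `D̂ₓ = ∂ₓ + p ∂ᵤ + q ∂ₚ + f ∂_q` of the ODE `u''' = f`. -/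
def Dhat (f g : Fn) : Fn := fun x u p q =>
  pdx g x u p q + p * pdu g x u p q + q * pdp g x u p q + f x u p q * pdq g x u p q

/-- `I₁ = −f_q`. -/
def I1 (f : Fn) : Fn := fun x u p q => -(pdq f x u p q)

/-- `I₂ = −(2/9)I₁² − f_p − (1/3)D̂ₓI₁`. -/
def I2 (f : Fn) : Fn := fun x u p q =>
  -(2/9) * (I1 f x u p q)^2 - pdp f x u p q - (1/3) * Dhat f (I1 f) x u p q

/-- `I₃ = −(1/3)I₁I₂ − f_u − (1/2)D̂ₓI₂`. -/
def I3 (f : Fn) : Fn := fun x u p q =>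
  -(1/3) * I1 f x u p q * I2 f x u p q - pdu f x u p q - (1/2) * Dhat f (I2 f) x u p q

/-- `J₃`, the real cube root of `I₃`. -/
def J3 (f : Fn) : Fn := fun x u p q => cbrt (I3 f x u p q)

/-- `I₄ = (J₃)_q`. -/
def I4 (f : Fn) : Fn := pdq (J3 f)

/-- `I₅ = (1/(3J₃²))(I₁J₃ + 3D̂ₓJ₃)`. -/
def I5 (f : Fn) : Fn := fun x u p q =>
  (1 / (3 * (J3 f x u p q)^2)) * (I1 f x u p q * J3 f x u p q + 3 * Dhat f (J3 f) x u p q)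

/-- `I₇ = −(I₅)_q J₃²`. -/
def I7 (f : Fn) : Fn := fun x u p q => -(pdq (I5 f) x u p q) * (J3 f x u p q)^2

/-- `I₉ = 2J₃D̂ₓI₅ − I₂ + J₃²I₅²`. -/
def I9 (f : Fn) : Fn := fun x u p q =>
  2 * J3 f x u p q * Dhat f (I5 f) x u p q - I2 f x u p q
    + (J3 f x u p q)^2 * (I5 f x u p q)^2

/-- `K = I₉/J₃²`. -/
def Kinv (f : Fn) : Fn := fun x u p q => I9 f x u p q / (J3 f x u p q)^2

/-- `Q = −(I₁I₇ + 3J₃²(I₅)_p + 3(J₃)_u − 3J₃I₄D̂ₓI₅)/(3J₃)`. -/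
def Qinv (f : Fn) : Fn := fun x u p q =>
  -(I1 f x u p q * I7 f x u p q + 3 * (J3 f x u p q)^2 * pdp (I5 f) x u p q
      + 3 * pdu (J3 f) x u p q
      - 3 * J3 f x u p q * I4 f x u p q * Dhat f (I5 f) x u p q)
    / (3 * J3 f x u p q)

/-- `I₆ = (2/3)(J₃)_q I₁ − (1/3)(I₁)_q J₃ − 2(J₃)_p + 2J₃I₄I₅`. -/
def I6 (f : Fn) : Fn := fun x u p q =>
  (2/3) * pdq (J3 f) x u p q * I1 f x u p q - (1/3) * pdq (I1 f) x u p q * J3 f x u p q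
    - 2 * pdp (J3 f) x u p q + 2 * J3 f x u p q * I4 f x u p q * I5 f x u p q

/-- `I₈ = (I₄)_q`. -/
def I8 (f : Fn) : Fn := pdq (I4 f)

/-- `I₁₀ = I₄D̂ₓI₇ − J₃(I₇)_p + J₃²(I₄/J₃)_u`. -/
def I10 (f : Fn) : Fn := fun x u p q =>
  I4 f x u p q * Dhat f (I7 f) x u p q - J3 f x u p q * pdp (I7 f) x u p q
    + (J3 f x u p q)^2 *
      pdu (fun x' u' p' q' => I4 f x' u' p' q' / J3 f x' u' p' q') x u p q

/-- `I₁₁ = (J₃)_u − D̂ₓI₇`. -/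
def I11 (f : Fn) : Fn := fun x u p q =>
  pdu (J3 f) x u p q - Dhat f (I7 f) x u p q

/-- `I₁₂`. -/
def I12 (f : Fn) : Fn := fun x u p q =>
  6 * I1 f x u p q * J3 f x u p q *
      (I5 f x u p q * I7 f x u p q - I4 f x u p q * Dhat f (I5 f) x u p q)
    - 18 * (J3 f x u p q)^3 * I4 f x u p q
    + 6 * pdp (I5 f) x u p q * I1 f x u p q * (J3 f x u p q)^2
    - 18 * I2 f x u p q * J3 f x u p q * I4 f x u p q * I5 f x u p q
    - 18 * J3 f x u p q * I7 f x u p q * Dhat f (I5 f) x u p q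
    + 18 * (J3 f x u p q)^2 * pdu (I5 f) x u p q
    + 18 * I2 f x u p q * Dhat f (I4 f) x u p q
    + 2 * (I1 f x u p q)^2 * I7 f x u p q
    - 9 * pdp (I2 f) x u p q * J3 f x u p q
    + 6 * (J3 f x u p q)^2 *
        pdu (fun x' u' p' q' => I1 f x' u' p' q' / J3 f x' u' p' q') x u p q
    + 36 * I2 f x u p q * I7 f x u p q

/-- `I₁₃ = (J₃I₄I₅ − I₇)D̂ₓK + J₃K_u − J₃²I₅K_p`. -/
def I13 (f : Fn) : Fn := fun x u p q =>
  (J3 f x u p q * I4 f x u p q * I5 f x u p q - I7 f x u p q) * Dhat f (Kinv f) x u p q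
    + J3 f x u p q * pdu (Kinv f) x u p q
    - (J3 f x u p q)^2 * I5 f x u p q * pdp (Kinv f) x u p q

/-- `I₁₄ = K_q`. -/
def I14 (f : Fn) : Fn := pdq (Kinv f)

/-- `I₁₅ = I₄D̂ₓK − J₃K_p`. -/
def I15 (f : Fn) : Fn := fun x u p q =>
  I4 f x u p q * Dhat f (Kinv f) x u p q - J3 f x u p q * pdp (Kinv f) x u p q

lemma cbrt_cube (a : ℝ) : cbrt (a^3) = a := by
  unfold cbrt
  rcases le_or_gt 0 a with h | h
  · rw [if_pos (by positivity)]
    rw [← Real.rpow_natCast a 3, ← Real.rpow_mul h]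
    norm_num
  · rw [if_neg (by simp only [not_le]; nlinarith [pow_pos (neg_pos.2 h) 3])]
    have h3 : -(a^3) = (-a)^3 := by ring
    rw [h3, ← Real.rpow_natCast (-a) 3, ← Real.rpow_mul (by linarith)]
    norm_num

lemma deriv_quartic (a b c d e t : ℝ) :
    deriv (fun s : ℝ => a + b*s + c*s^2 + d*s^3 + e*s^4) t
      = b + 2*c*t + 3*d*t^2 + 4*e*t^3 := by
  have h : HasDerivAt (fun s : ℝ => a + b*s + c*s^2 + d*s^3 + e*s^4)
      (b + 2*c*t + 3*d*t^2 + 4*e*t^3) t := by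
    have := ((((hasDerivAt_const t a).add ((hasDerivAt_id t).const_mul b)).add
      ((hasDerivAt_pow 2 t).const_mul c)).add
      ((hasDerivAt_pow 3 t).const_mul d)).add
      ((hasDerivAt_pow 4 t).const_mul e)
    exact this.congr_deriv (by push_cast; ring)
  exact h.deriv

lemma deriv_c_div_sq (c t : ℝ) (ht : t ≠ 0) :
    deriv (fun s : ℝ => c / s^2) t = -2*c/t^3 := by
  have h : HasDerivAt (fun s : ℝ => c / s^2) ((0*t^2 - c*(2*t^1))/(t^2)^2) t :=
    (hasDerivAt_const t c).div (hasDerivAt_pow 2 t) (pow_ne_zero 2 ht)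
  rw [h.deriv]; field_simp; ring

lemma deriv_c_div (c t : ℝ) (ht : t ≠ 0) :
    deriv (fun s : ℝ => c / s) t = -c/t^2 := by
  have h : HasDerivAt (fun s : ℝ => c / s) ((0*t - c*1)/t^2) t :=
    (hasDerivAt_const t c).div (hasDerivAt_id t) ht
  rw [h.deriv]; field_simp; ring
/-- The example `f`. -/
local notation "F" => (fun x u p q => -x * p^4 * q^3 + u * p^3 * q^3 : Fn)

lemma hI1 : I1 F = fun x u p q => 3*p^3*q^2*(p*x-u) := by
  funext x u p q
  simp only [I1, pdq]
  rw [show (fun t : ℝ => -x*p^4*t^3 + u*p^3*t^3)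
      = (fun s : ℝ => 0 + 0*s + 0*s^2 + (u*p^3 - x*p^4)*s^3 + 0*s^4)
      from funext fun s => by ring, deriv_quartic]
  ring

lemma hI2 : I2 F = fun _ _ _ _ => (0:ℝ) := by
  funext x u p q
  simp only [I2, Dhat, hI1, pdx, pdu, pdp, pdq]
  rw [show (fun t : ℝ => -x*t^4*q^3 + u*t^3*q^3)
      = (fun s : ℝ => 0 + 0*s + 0*s^2 + (u*q^3)*s^3 + (-x*q^3)*s^4)
      from funext fun s => by ring,
    show (fun t : ℝ => 3*p^3*q^2*(p*t-u))
      = (fun s : ℝ => (-(3*p^3*q^2*u)) + (3*p^3*q^2*p)*s + 0*s^2 + 0*s^3 + 0*s^4)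
      from funext fun s => by ring,
    show (fun t : ℝ => 3*p^3*q^2*(p*x-t))
      = (fun s : ℝ => (3*p^3*q^2*(p*x)) + (-(3*p^3*q^2))*s + 0*s^2 + 0*s^3 + 0*s^4)
      from funext fun s => by ring,
    show (fun t : ℝ => 3*t^3*q^2*(t*x-u))
      = (fun s : ℝ => 0 + 0*s + 0*s^2 + (-(3*q^2*u))*s^3 + (3*q^2*x)*s^4)
      from funext fun s => by ring,
    show (fun t : ℝ => 3*p^3*t^2*(p*x-u))
      = (fun s : ℝ => 0 + 0*s + (3*p^3*(p*x-u))*s^2 + 0*s^3 + 0*s^4)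
      from funext fun s => by ring,
    deriv_quartic, deriv_quartic, deriv_quartic, deriv_quartic, deriv_quartic]
  ring

lemma hI3 : I3 F = fun x u p q => (-(p*q))^3 := by
  funext x u p q
  simp only [I3, hI1, hI2, Dhat, pdx, pdu, pdp, pdq, deriv_const]
  rw [show (fun t : ℝ => -x*p^4*q^3 + t*p^3*q^3)
      = (fun s : ℝ => (-x*p^4*q^3) + (p^3*q^3)*s + 0*s^2 + 0*s^3 + 0*s^4)
      from funext fun s => by ring, deriv_quartic]
  ring

lemma hJ3 : J3 F = fun x u p q => -(p*q) := by
  funext x u p q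
  simp only [J3, hI3]
  exact cbrt_cube _

lemma hI4 : I4 F = fun _ _ p _ => -p := by
  funext x u p q
  simp only [I4, pdq, hJ3]
  rw [show (fun t : ℝ => -(p*t))
      = (fun s : ℝ => 0 + (-p)*s + 0*s^2 + 0*s^3 + 0*s^4)
      from funext fun s => by ring, deriv_quartic]
  ring

lemma hDJ3 : Dhat F (J3 F) = fun x u p q => -q^2 + p^4*q^3*(p*x-u) := by
  funext x u p q
  simp only [Dhat, hJ3, pdx, pdu, pdp, pdq, deriv_const]
  rw [show (fun t : ℝ => -(t*q))
      = (fun s : ℝ => 0 + (-q)*s + 0*s^2 + 0*s^3 + 0*s^4)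
      from funext fun s => by ring,
    show (fun t : ℝ => -(p*t))
      = (fun s : ℝ => 0 + (-p)*s + 0*s^2 + 0*s^3 + 0*s^4)
      from funext fun s => by ring,
    deriv_quartic, deriv_quartic]
  ring

lemma hI5 : I5 F = fun x u p q => 1/(3*(p*q)^2) * (-3*q^2) := by
  funext x u p q
  rw [I5]; rw [hDJ3, hJ3, hI1]
  ring
lemma hI5x (x u p q : ℝ) : pdx (I5 F) x u p q = 0 := by
  simp only [pdx, hI5]; exact deriv_const _ _

lemma hI5u (x u p q : ℝ) : pdu (I5 F) x u p q = 0 := by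
  simp only [pdu, hI5]; exact deriv_const _ _

lemma hI5q (x u p q : ℝ) (hp : p ≠ 0) (hq : q ≠ 0) : pdq (I5 F) x u p q = 0 := by
  simp only [pdq, hI5]
  have hev : (fun t : ℝ => 1/(3*(p*t)^2) * (-3*t^2)) =ᶠ[nhds q] (fun _ : ℝ => -1/p^2) := by
    filter_upwards [eventually_ne_nhds hq] with t ht
    field_simp
  rw [hev.deriv_eq, deriv_const]

lemma hI5p (x u p q : ℝ) (hp : p ≠ 0) (hq : q ≠ 0) : pdp (I5 F) x u p q = 2/p^3 := by
  simp only [pdp, hI5]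
  have hev : (fun t : ℝ => 1/(3*(t*q)^2) * (-3*q^2)) =ᶠ[nhds p] (fun t : ℝ => -1/t^2) := by
    filter_upwards [eventually_ne_nhds hp] with t ht
    field_simp
  rw [hev.deriv_eq, deriv_c_div_sq (-1) p hp]
  ring

lemma hI7 (x u p q : ℝ) (hp : p ≠ 0) (hq : q ≠ 0) : I7 F x u p q = 0 := by
  simp only [I7, hI5q x u p q hp hq]; ring

lemma hDI5 (x u p q : ℝ) (hp : p ≠ 0) (hq : q ≠ 0) : Dhat F (I5 F) x u p q = 2*q/p^3 := by
  simp only [Dhat, hI5x, hI5u, hI5p x u p q hp hq, hI5q x u p q hp hq]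
  ring

lemma hJ3u (x u p q : ℝ) : pdu (J3 F) x u p q = 0 := by
  simp only [pdu, hJ3]; exact deriv_const _ _

lemma hK (x u p q : ℝ) (hp : p ≠ 0) (hq : q ≠ 0) : Kinv F x u p q = -3/p^4 := by
  simp only [Kinv, I9]
  rw [hDI5 x u p q hp hq]
  simp only [hI2, hJ3, hI5]
  field_simp; ring

lemma hQ (x u p q : ℝ) (hp : p ≠ 0) (hq : q ≠ 0) : Qinv F x u p q = 0 := by
  simp only [Qinv]
  rw [hDI5 x u p q hp hq, hI5p x u p q hp hq, hJ3u, hI7 x u p q hp hq]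
  simp only [hI1, hJ3, hI4]
  field_simp
  ring
lemma hDb : Dhat F (lift (fun _ _ p => p)) = fun _ _ _ q => q := by
  funext x u p q
  simp only [Dhat, lift, pdx, pdu, pdp, pdq, deriv_const, deriv_id'']
  ring

lemma hDchi : Dhat F (lift (fun x _ _ => -x)) = fun _ _ _ _ => (-1:ℝ) := by
  funext x u p q
  simp only [Dhat, lift, pdx, pdu, pdp, pdq, deriv_const]
  rw [show (fun t : ℝ => -t)
      = (fun s : ℝ => 0 + (-1)*s + 0*s^2 + 0*s^3 + 0*s^4)
      from funext fun s => by ring, deriv_quartic]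
  ring

lemma hDa : Dhat F (lift (fun _ _ _ => (1:ℝ))) = fun _ _ _ _ => (0:ℝ) := by
  funext x u p q
  simp only [Dhat, lift, pdx, pdu, pdp, pdq, deriv_const]
  ring

lemma hDH (x u p q : ℝ) (hp : p ≠ 0) :
    Dhat F (lift (fun _ _ p => 1/p^2)) x u p q = -2*q/p^3 := by
  simp only [Dhat, lift, pdx, pdu, pdp, pdq, deriv_const]
  rw [deriv_c_div_sq 1 p hp]
  ring

/-- For `f(x,u,p,q) = −x·p⁴q³ + u·p³q³` on `{p ≠ 0, q ≠ 0}`, the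
explicit functions `H = 1/p²`, `b = p`, `a₁ = 1`, `φ = p`, `χ = −x`, `ψ = u − xp` solve
the systems (i)–(v) of Proposition 4.2, with `η := D̂ₓχ/D̂ₓφ` and `f̄ := φ³·ψ`. -/
theorem construction_example2
    (f : Fn) (hfdef : f = fun x u p q => -x * p^4 * q^3 + u * p^3 * q^3)
    (H : Fn3) (hH : H = fun _ _ p => 1 / p^2)
    (b : Fn3) (hb : b = fun _ _ p => p)
    (a1 : Fn3) (ha1 : a1 = fun _ _ _ => 1)
    (φ : Fn3) (hφ : φ = fun _ _ p => p)
    (χ : Fn3) (hχ : χ = fun x _ _ => -x)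
    (ψ : Fn3) (hψ : ψ = fun x u p => u - x*p)
    (η : Fn)
    (hη : η = fun x u p q => Dhat f (lift χ) x u p q / Dhat f (lift φ) x u p q)
    (fbar : Fn3) (hfbar : fbar = fun x u p => (φ x u p)^3 * ψ x u p) :
    ∀ x u p q : ℝ, p ≠ 0 → q ≠ 0 →
      -- (i)  the Riccati equation for H
      (-(2 / J3 f x u p q) * Dhat f (lift H) x u p q + (H x u p)^2 = Kinv f x u p q) ∧
      -- (ii)  the equation for b
      (Dhat f (lift b) x u p q = -(J3 f x u p q * H x u p) * b x u p) ∧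
      -- (iii)  the system for a₁
      (Dhat f (lift a1) x u p q
         = J3 f x u p q * (H x u p + I5 f x u p q) * a1 x u p ∧
       pdu3 a1 x u p = (H x u p * I7 f x u p q - Qinv f x u p q) * a1 x u p ∧
       pdp3 a1 x u p
         = (I4 f x u p q * (H x u p + I5 f x u p q)
             - I7 f x u p q / J3 f x u p q) * a1 x u p ∧
       pdq (lift a1) x u p q = 0) ∧
      -- (iv)  the system for φ
      (Dhat f (lift φ) x u p q = -(J3 f x u p q) / b x u p ∧
       pdu3 φ x u p = -(I7 f x u p q) / b x u p ∧
       pdp3 φ x u p = -(I4 f x u p q) / b x u p) ∧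
      -- (v)  the system for η, χ, ψ
      (Dhat f η x u p q = -(J3 f x u p q / b x u p) * fbar x u p ∧
       pdu η x u p q
         = ((H x u p + I5 f x u p q)^2 / 2
              + I2 f x u p q / (2 * (J3 f x u p q)^2)) * (b x u p)^2 * a1 x u p
             - (I7 f x u p q / b x u p) * fbar x u p ∧
       pdp η x u p q
         = ((H x u p + I5 f x u p q) / J3 f x u p q
              + I1 f x u p q / (3 * (J3 f x u p q)^2)) * (b x u p)^2 * a1 x u p
             - (I4 f x u p q / b x u p) * fbar x u p ∧
       pdq η x u p q = (b x u p)^2 * a1 x u p / (J3 f x u p q)^2 ∧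
       Dhat f (lift χ) x u p q = -(J3 f x u p q / b x u p) * η x u p q ∧
       pdu3 χ x u p
         = -(H x u p + I5 f x u p q) * b x u p * a1 x u p
             - (I7 f x u p q / b x u p) * η x u p q ∧
       pdp3 χ x u p
         = -(b x u p * a1 x u p / J3 f x u p q)
             - (I4 f x u p q / b x u p) * η x u p q ∧
       I7 f x u p q * Dhat f (lift ψ) x u p q
         = J3 f x u p q * (pdu3 ψ x u p - a1 x u p) ∧
       pdx3 ψ x u p = χ x u p * pdx3 φ x u p - p * a1 x u p ∧
       pdp3 ψ x u p = -(I4 f x u p q / b x u p) * χ x u p) := by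
  subst hfdef hH hb ha1 hφ hχ hψ hfbar
  intro x u p q hp hq
  have hη' : η = fun _ _ _ q => -1/q := by
    funext a b c d
    simp only [hη, hDchi, hDb]
  refine ⟨?_, ?_, ⟨?_, ?_, ?_, ?_⟩, ⟨?_, ?_, ?_⟩,
    ?_, ?_, ?_, ?_, ?_, ?_, ?_, ?_, ?_, ?_⟩
  · -- (i)
    rw [hK x u p q hp hq, hDH x u p q hp]
    simp only [hJ3]
    field_simp
    try ring
    try tauto
    try ring
  · -- (ii)
    rw [hDb]
    simp only [hJ3]
    field_simp
    try ring
    try tauto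
  · -- (iii) Dhat a1
    rw [hDa]
    simp only [hJ3, hI5]
    field_simp
    try ring
    try tauto
  · -- (iii) pdu3 a1
    simp only [pdu3, deriv_const]
    rw [hI7 x u p q hp hq, hQ x u p q hp hq]
    ring
  · -- (iii) pdp3 a1
    simp only [pdp3, deriv_const]
    rw [hI7 x u p q hp hq]
    simp only [hI4, hJ3, hI5]
    field_simp
    try ring
    try tauto
  · -- (iii) pdq a1
    simp only [pdq, lift, deriv_const]
  · -- (iv) Dhat φ
    rw [hDb]
    simp only [hJ3]
    field_simp
    try ring
    try tauto
  · -- (iv) pdu3 φ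
    simp only [pdu3, deriv_const]
    rw [hI7 x u p q hp hq]
    simp
  · -- (iv) pdp3 φ
    simp only [pdp3, deriv_id'']
    simp only [hI4]
    field_simp
    try ring
    try tauto
  · -- (v) Dhat η
    rw [hη']
    simp only [Dhat, pdx, pdu, pdp, pdq, deriv_const]
    rw [deriv_c_div (-1) q hq]
    simp only [hJ3]
    field_simp
    try ring
    try tauto
    try ring
  · -- (v) pdu η
    rw [hη']
    simp only [pdu, deriv_const]
    rw [hI7 x u p q hp hq]
    simp only [hI5, hI2, hJ3]
    field_simp
    try ring
    try tauto
    try ring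
  · -- (v) pdp η
    rw [hη']
    simp only [pdp, deriv_const]
    simp only [hI1, hI4, hI5, hJ3]
    field_simp
    try ring
    try tauto
    try ring
  · -- (v) pdq η
    rw [hη']
    simp only [pdq]
    rw [deriv_c_div (-1) q hq]
    simp only [hJ3]
    field_simp
    try ring
    try tauto
    try ring
  · -- (v) Dhat χ
    rw [hη', hDchi]
    simp only [hJ3]
    field_simp
    try ring
    try tauto
  · -- (v) pdu3 χ
    simp only [pdu3, deriv_const]
    rw [hη', hI7 x u p q hp hq]
    simp only [hI5, hJ3]
    field_simp
    try ring
    try tauto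
    try ring
  · -- (v) pdp3 χ
    simp only [pdp3, deriv_const]
    rw [hη']
    simp only [hI4, hJ3]
    field_simp
    try ring
    try tauto
    try ring
  · -- (v) ψ equation
    rw [hI7 x u p q hp hq]
    simp only [pdu3, hJ3]
    rw [show (fun t : ℝ => t - x*p)
        = (fun s : ℝ => (-(x*p)) + 1*s + 0*s^2 + 0*s^3 + 0*s^4)
        from funext fun s => by ring, deriv_quartic]
    ring
  · -- (v) pdx3 ψ
    simp only [pdx3, deriv_const]
    rw [show (fun t : ℝ => u - t*p)
        = (fun s : ℝ => u + (-p)*s + 0*s^2 + 0*s^3 + 0*s^4)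
        from funext fun s => by ring, deriv_quartic]
    ring
  · -- (v) pdp3 ψ
    simp only [pdp3]
    rw [show (fun t : ℝ => u - x*t)
        = (fun s : ℝ => u + (-x)*s + 0*s^2 + 0*s^3 + 0*s^4)
        from funext fun s => by ring, deriv_quartic]
    simp only [hI4]
    field_simp
    try ring
    try tauto
    try ring

end
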